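/- Let ν be a probability measure and for b ∈ L²(ν) with ‖b‖_{L²(ν)} bounded, define the path ν_t by dν_t/dν = k(t b)/∫ k(t b) dν, where k(y) = 2/(1+e^{-2y}). Then each ν_t is a probability measure, and the map t ↦ ∫ ζ dν_t is differentiable at t = 0 for any ζ ∈ L²(ν) with derivative ∫ ζ (b − ∫ b dν) dν; in particular if ∫ b dν = 0 the derivative equals ⟨ζ, b⟩_{L²(ν)}. -/

import Mathlib

open MeasureTheory
open scoped ENNReal NNReal

noncomputable def kfun (y : ℝ) : ℝ := 2 / (1 + Real.exp (-2 * y))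

/-- The path `t ↦ ν_t` with `dν_t/dν = k(t b) / ∫ k(t b) dν`. -/
noncomputable def pathMeasure (ν : Measure ℝ) (b : ℝ → ℝ) (t : ℝ) : Measure ℝ :=
  ν.withDensity (fun x => ENNReal.ofReal (kfun (t * b x) / ∫ y, kfun (t * b y) ∂ν))

noncomputable def kderiv (y : ℝ) : ℝ := 4 * Real.exp (-2 * y) / (1 + Real.exp (-2 * y)) ^ 2

lemma kfun_denom_pos (y : ℝ) : 0 < 1 + Real.exp (-2 * y) := by positivity

lemma kfun_pos (y : ℝ) : 0 < kfun y := by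
  unfold kfun; positivity

lemma kfun_le_two (y : ℝ) : kfun y ≤ 2 := by
  unfold kfun
  rw [div_le_iff₀ (kfun_denom_pos y)]
  nlinarith [Real.exp_pos (-2 * y)]

lemma kfun_continuous : Continuous kfun := by
  apply Continuous.div continuous_const (by continuity)
  intro y; exact (kfun_denom_pos y).ne'

lemma kderiv_continuous : Continuous kderiv := by
  apply Continuous.div (by continuity) (by continuity)
  intro y; positivity

lemma hasDerivAt_kfun (y : ℝ) : HasDerivAt kfun (kderiv y) y := by
  have h1 : HasDerivAt (fun y : ℝ => 1 + Real.exp (-2 * y))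
      (Real.exp (-2 * y) * (-2)) y := by
    have := (Real.hasDerivAt_exp (-2 * y)).comp y
      ((hasDerivAt_id y).const_mul (-2))
    simpa [mul_comm] using this.const_add 1
  have h2 := (h1.inv (kfun_denom_pos y).ne').const_mul (2:ℝ)
  have h3 : kfun = fun y => 2 * (1 + Real.exp (-2 * y))⁻¹ := by
    funext z; rw [kfun, div_eq_mul_inv]
  rw [h3]
  refine h2.congr_deriv ?_
  unfold kderiv
  field_simp
  ring

lemma kderiv_nonneg (y : ℝ) : 0 ≤ kderiv y := by unfold kderiv; positivity

lemma kderiv_le_one (y : ℝ) : kderiv y ≤ 1 := by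
  unfold kderiv
  rw [div_le_one (by positivity)]
  nlinarith [Real.exp_pos (-2 * y), sq_nonneg (1 - Real.exp (-2 * y))]

lemma kderiv_zero : kderiv 0 = 1 := by
  unfold kderiv; norm_num

lemma kfun_zero : kfun 0 = 1 := by unfold kfun; norm_num

/-- Each `ν_t` is a probability measure, and `t ↦ ∫ ζ dν_t` is differentiable at 0
with derivative `∫ ζ (b − ∫ b dν) dν`; in particular it equals `⟨ζ, b⟩_{L²(ν)}` when
`b` is centered. -/
theorem path_probability_and_derivative
    (ν : Measure ℝ) [IsProbabilityMeasure ν]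
    (b : ℝ → ℝ) (hb : MemLp b 2 ν) :
    (∀ t : ℝ, IsProbabilityMeasure (pathMeasure ν b t)) ∧
    (∀ ζ : ℝ → ℝ, MemLp ζ 2 ν →
      HasDerivAt (fun t => ∫ x, ζ x ∂(pathMeasure ν b t))
        (∫ x, ζ x * (b x - ∫ y, b y ∂ν) ∂ν) 0 ∧
      ((∫ y, b y ∂ν) = 0 →
        HasDerivAt (fun t => ∫ x, ζ x ∂(pathMeasure ν b t))
          (∫ x, ζ x * b x ∂ν) 0)) := by
  have hbm : AEStronglyMeasurable b ν := hb.aestronglyMeasurable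
  have hbint : Integrable b ν := hb.integrable one_le_two
  have hkm : ∀ t : ℝ, AEStronglyMeasurable (fun x => kfun (t * b x)) ν := fun t =>
    kfun_continuous.comp_aestronglyMeasurable (hbm.const_mul t)
  have hkint : ∀ t : ℝ, Integrable (fun x => kfun (t * b x)) ν := by
    intro t
    refine (integrable_const (2 : ℝ)).mono' (hkm t) ?_
    filter_upwards with x
    rw [Real.norm_eq_abs, abs_of_pos (kfun_pos _)]
    exact kfun_le_two _
  set C : ℝ → ℝ := fun t => ∫ y, kfun (t * b y) ∂ν with hC
  have hCpos : ∀ t, 0 < C t := by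
    intro t
    rw [hC]
    rw [integral_pos_iff_support_of_nonneg_ae
      (Filter.Eventually.of_forall fun x => (kfun_pos _).le) (hkint t)]
    have : (Function.support fun x => kfun (t * b x)) = Set.univ := by
      ext x; simp [Function.mem_support, (kfun_pos (t * b x)).ne']
    rw [this]
    simp
  have hC0 : C 0 = 1 := by
    rw [hC]; simp [kfun_zero]
  have hprob : ∀ t : ℝ, IsProbabilityMeasure (pathMeasure ν b t) := by
    intro t
    constructor
    rw [pathMeasure, withDensity_apply _ MeasurableSet.univ, Measure.restrict_univ]
    have hint : Integrable (fun x => kfun (t * b x) / C t) ν := (hkint t).div_const _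
    rw [← ofReal_integral_eq_lintegral_ofReal hint
      (Filter.Eventually.of_forall fun x => div_nonneg (kfun_pos _).le (hCpos t).le)]
    rw [integral_div, div_self (hCpos t).ne']
    simp
  refine ⟨hprob, ?_⟩
  intro ζ hζ
  have hζm : AEStronglyMeasurable ζ ν := hζ.aestronglyMeasurable
  have hζint : Integrable ζ ν := hζ.integrable one_le_two
  have hζb : Integrable (fun x => ζ x * b x) ν := by
    have : MemLp (ζ • b) 1 ν := by
      refine hb.smul hζ
    exact memLp_one_iff_integrable.mp this
  -- integral over pathMeasure as a quotient
  have key : ∀ t : ℝ, (∫ x, ζ x ∂(pathMeasure ν b t))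
      = (∫ x, ζ x * kfun (t * b x) ∂ν) / C t := by
    intro t
    rw [pathMeasure]
    have hg : AEMeasurable (fun x => (Real.toNNReal (kfun (t * b x) / C t))) ν :=
      ((hkm t).aemeasurable.div_const _).real_toNNReal
    have hd : (fun x => ENNReal.ofReal (kfun (t * b x) / C t))
        = fun x => ((Real.toNNReal (kfun (t * b x) / C t) : ℝ≥0) : ℝ≥0∞) := by
      funext x; rfl
    rw [hd, integral_withDensity_eq_integral_smul₀ hg]
    rw [← integral_div]
    apply integral_congr_ae
    filter_upwards with x
    have h0 : (0:ℝ) ≤ kfun (t * b x) / C t := div_nonneg (kfun_pos _).le (hCpos t).le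
    simp only [NNReal.smul_def, Real.coe_toNNReal _ h0, smul_eq_mul]
    ring
  -- derivative of numerator
  have hN : HasDerivAt (fun t => ∫ x, ζ x * kfun (t * b x) ∂ν)
      (∫ x, ζ x * b x ∂ν) 0 := by
    have hder := hasDerivAt_integral_of_dominated_loc_of_deriv_le (s := Set.univ) Filter.univ_mem
      (F := fun t x => ζ x * kfun (t * b x))
      (F' := fun t x => ζ x * (kderiv (t * b x) * b x))
      (bound := fun x => |ζ x * b x|)
      (Filter.Eventually.of_forall fun t => hζm.mul (hkm t))
      (hζint.congr (by filter_upwards with x; simp [kfun_zero]))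
      (hζm.mul ((kderiv_continuous.comp_aestronglyMeasurable
        (hbm.const_mul 0)).mul hbm))
      (by
        filter_upwards with x t _
        rw [Real.norm_eq_abs, abs_mul, abs_mul, abs_mul]
        have h1 : |kderiv (t * b x)| ≤ 1 := by
          rw [abs_of_nonneg (kderiv_nonneg _)]; exact kderiv_le_one _
        calc |ζ x| * (|kderiv (t * b x)| * |b x|) ≤ |ζ x| * (1 * |b x|) := by
              gcongr
          _ = |ζ x| * |b x| := by ring)
      hζb.abs
      (by
        filter_upwards with x t _
        have h1 : HasDerivAt (fun t : ℝ => t * b x) (b x) t := hasDerivAt_mul_const (b x)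
        exact ((hasDerivAt_kfun (t * b x)).comp t h1).const_mul (ζ x))
    have := hder.2
    have heq : (∫ x, ζ x * (kderiv (0 * b x) * b x) ∂ν) = ∫ x, ζ x * b x ∂ν := by
      apply integral_congr_ae
      filter_upwards with x
      simp [kderiv_zero]
    rwa [heq] at this
  -- derivative of denominator
  have hD : HasDerivAt C (∫ y, b y ∂ν) 0 := by
    have hder := hasDerivAt_integral_of_dominated_loc_of_deriv_le (s := Set.univ) Filter.univ_mem
      (F := fun t x => kfun (t * b x))
      (F' := fun t x => kderiv (t * b x) * b x)
      (bound := fun x => |b x|)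
      (Filter.Eventually.of_forall fun t => hkm t)
      (hkint 0)
      (((kderiv_continuous.comp_aestronglyMeasurable (hbm.const_mul 0)).mul hbm))
      (by
        filter_upwards with x t _
        rw [Real.norm_eq_abs, abs_mul]
        have h1 : |kderiv (t * b x)| ≤ 1 := by
          rw [abs_of_nonneg (kderiv_nonneg _)]; exact kderiv_le_one _
        calc |kderiv (t * b x)| * |b x| ≤ 1 * |b x| := by gcongr
          _ = |b x| := one_mul _)
      hbint.abs
      (by
        filter_upwards with x t _
        have h1 : HasDerivAt (fun t : ℝ => t * b x) (b x) t := hasDerivAt_mul_const (b x)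
        have h2 := (hasDerivAt_kfun (t * b x)).comp t h1
        exact h2)
    have := hder.2
    have heq : (∫ x, kderiv (0 * b x) * b x ∂ν) = ∫ y, b y ∂ν := by
      apply integral_congr_ae
      filter_upwards with x
      simp [kderiv_zero]
    rwa [heq] at this
  -- quotient
  have hfeq : (fun t => ∫ x, ζ x ∂(pathMeasure ν b t))
      = fun t => (∫ x, ζ x * kfun (t * b x) ∂ν) / C t := funext key
  have hN0 : (∫ x, ζ x * kfun (0 * b x) ∂ν) = ∫ x, ζ x ∂ν := by
    apply integral_congr_ae
    filter_upwards with x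
    simp [kfun_zero]
  have hQ := hN.div hD (by rw [hC0]; exact one_ne_zero)
  have hderiv : HasDerivAt (fun t => ∫ x, ζ x ∂(pathMeasure ν b t))
      ((∫ x, ζ x * b x ∂ν) - (∫ x, ζ x ∂ν) * ∫ y, b y ∂ν) 0 := by
    rw [hfeq]
    refine hQ.congr_deriv ?_
    rw [hN0, hC0]
    ring
  have hmain : HasDerivAt (fun t => ∫ x, ζ x ∂(pathMeasure ν b t))
      (∫ x, ζ x * (b x - ∫ y, b y ∂ν) ∂ν) 0 := by
    have : (∫ x, ζ x * (b x - ∫ y, b y ∂ν) ∂ν)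
        = (∫ x, ζ x * b x ∂ν) - (∫ x, ζ x ∂ν) * ∫ y, b y ∂ν := by
      simp_rw [mul_sub]
      rw [integral_sub hζb (hζint.mul_const _), integral_mul_const]
    rw [this]
    exact hderiv
  refine ⟨hmain, fun hm => ?_⟩
  have := hmain
  rw [hm] at this
  simpa using this
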